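/- Let L be a local field of characteristic 0 (i.e., R, C, or a finite extension of Q_p) and let f(x,y) ∈ L[x,y] be a nonconstant polynomial. Then the induced map L × L → L is not injective. -/

import Mathlib

open MvPolynomial Function Topology Filter

/-- Formal partial derivative is nonzero at a variable that occurs, in char zero. -/
lemma aux_pderiv_ne_zero {σ : Type*} [DecidableEq σ] {R : Type*} [CommRing R] [IsDomain R]
    [CharZero R] {p : MvPolynomial σ R} {i : σ} (hi : i ∈ p.vars) : pderiv i p ≠ 0 := by
  obtain ⟨s₀, hs₀, his₀⟩ := (mem_vars i).mp hi
  have hs₀i : s₀ i ≠ 0 := Finsupp.mem_support_iff.mp his₀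
  set m : σ →₀ ℕ := s₀ - Finsupp.single i 1 with hm
  have key : coeff m (pderiv i p) = coeff s₀ p * (s₀ i : R) := by
    conv_lhs => rw [p.as_sum]
    rw [map_sum, MvPolynomial.coeff_sum]
    have : ∀ s ∈ p.support, coeff m (pderiv i (monomial s (coeff s p)))
        = if s = s₀ then coeff s₀ p * (s₀ i : R) else 0 := by
      intro s hs
      rw [pderiv_monomial, coeff_monomial]
      rcases eq_or_ne s s₀ with rfl | hne
      · simp [hm]
      · rw [if_neg hne]
        rcases Nat.eq_zero_or_pos (s i) with h0 | hpos
        · simp [h0]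
        · rw [if_neg]
          intro hsm
          apply hne
          have : s = m + Finsupp.single i 1 := by
            rw [← hsm]; ext j
            simp only [Finsupp.add_apply, Finsupp.tsub_apply, Finsupp.single_apply]
            rcases eq_or_ne i j with rfl | hij
            · simp; omega
            · simp [hij]
          have h2 : s₀ = m + Finsupp.single i 1 := by
            rw [hm]; ext j
            simp only [Finsupp.add_apply, Finsupp.tsub_apply, Finsupp.single_apply]
            rcases eq_or_ne i j with rfl | hij
            · simp; omega
            · simp [hij]
          rw [this, h2]
    rw [Finset.sum_congr rfl this, Finset.sum_ite_eq' p.support s₀, if_pos hs₀]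
  intro h
  rw [h, coeff_zero] at key
  have h1 : coeff s₀ p ≠ 0 := mem_support_iff.mp hs₀
  have h2 : (s₀ i : R) ≠ 0 := Nat.cast_ne_zero.mpr hs₀i
  exact (mul_ne_zero h1 h2) key.symm

/-- Analytic one-variable derivative of a multivariate polynomial along a coordinate. -/
lemma aux_hasDerivAt_eval_update {𝕜 : Type*} [NontriviallyNormedField 𝕜] {σ : Type*}
    [DecidableEq σ] (p : MvPolynomial σ 𝕜) (v : σ → 𝕜) (j : σ) (y : 𝕜) :
    HasDerivAt (fun x => eval (Function.update v j x) p)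
      (eval (Function.update v j y) (pderiv j p)) y := by
  induction p using MvPolynomial.induction_on with
  | C a => simpa using hasDerivAt_const y a
  | add p q hp hq => simp only [map_add]; exact hp.add hq
  | mul_X p i hp =>
    rcases eq_or_ne i j with rfl | hij
    · have h := hp.mul (hasDerivAt_id y)
      simp only [id] at h
      convert h using 1
      · rfl
      · funext x; simp [Function.update_self]
      · simp [pderiv_mul, pderiv_X_self, Function.update_self]; ring
    · have h := hp.mul_const (v i)
      convert h using 1
      · rfl
      · funext x; simp [Function.update_of_ne hij]
      · simp [pderiv_mul, pderiv_X_of_ne hij, Function.update_of_ne hij]; ring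



/-- Let `L` be a local field of characteristic 0 (a complete, locally compact
nontrivially normed field of characteristic zero, i.e. `ℝ`, `ℂ`, or a finite extension of
`ℚ_p`) and `f ∈ L[x,y]` a nonconstant polynomial. Then the induced map `L × L → L` is not
injective. -/
theorem stmt_10 (L : Type*) [NontriviallyNormedField L] [CompleteSpace L]
    [LocallyCompactSpace L] [CharZero L]
    (f : MvPolynomial (Fin 2) L) (hf : f.totalDegree ≠ 0) :
    ¬ Function.Injective (fun xy : L × L => MvPolynomial.eval ![xy.1, xy.2] f) := by
  set F : L × L → L := fun xy : L × L => MvPolynomial.eval ![xy.1, xy.2] f with hFdef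
  intro hinj
  have eta : ∀ w : Fin 2 → L, (![w 0, w 1] : Fin 2 → L) = w := by
    intro w; funext i; fin_cases i <;> rfl
  -- pick a variable occurring in f
  obtain ⟨j, hj⟩ : ∃ j : Fin 2, j ∈ f.vars := by
    by_contra h
    push_neg at h
    apply hf
    rw [MvPolynomial.totalDegree_eq_zero_iff]
    intro m hm x
    by_contra hx
    exact h x ((mem_vars x).mpr ⟨m, hm, Finsupp.mem_support_iff.mpr hx⟩)
  have hpd : pderiv j f ≠ 0 := aux_pderiv_ne_zero hj
  -- pick a point where the partial derivative doesn't vanish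
  obtain ⟨v, hv⟩ : ∃ v : Fin 2 → L, eval v (pderiv j f) ≠ 0 := by
    by_contra h
    push_neg at h
    exact hpd (MvPolynomial.funext fun x => by simp [h x])
  set a : L × L := (v 0, v 1) with ha
  -- analyticity and strict differentiability
  have hA : AnalyticAt L F a := by
    have h1 : ∀ i : Fin 2, AnalyticAt L (fun xy : L × L => (![xy.1, xy.2] : Fin 2 → L) i) a := by
      intro i
      fin_cases i
      · simpa using analyticAt_fst
      · simpa using analyticAt_snd
    have key : ∀ g : Fin 2 → L, (aeval g) f = eval g f := fun g => by
      rw [aeval_eq_eval₂Hom, Algebra.algebraMap_self]; rfl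
    have h2 := AnalyticAt.aeval_mvPolynomial (𝕜 := L) (z := a) h1 f
    rw [hFdef]
    simpa only [key] using h2
  set D : (L × L) →L[L] L := fderiv L F a with hD
  have hS : HasStrictFDerivAt F D a := hA.hasStrictFDerivAt
  -- directional derivative along coordinate j
  set c : L → L × L := fun x => (Function.update v j x 0, Function.update v j x 1) with hc
  have hcomp : ∀ i : Fin 2,
      HasDerivAt (fun x => Function.update v j x i) (if i = j then 1 else 0) (v j) := by
    intro i
    rcases eq_or_ne i j with rfl | h
    · simpa [Function.update_self] using hasDerivAt_id' (v i)
    · simpa [Function.update_of_ne h, h] using hasDerivAt_const (v j) (v i)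
  set e : L × L := (if (0 : Fin 2) = j then 1 else 0, if (1 : Fin 2) = j then 1 else 0) with he
  have hcd : HasDerivAt c e (v j) := (hcomp 0).prodMk (hcomp 1)
  have hca : c (v j) = a := by
    simp [hc, ha, Function.update_eq_self]
  have hchain : HasDerivAt (fun x => F (c x)) (D e) (v j) := by
    have hFd : HasFDerivAt F D (c (v j)) := by rw [hca]; exact hS.hasFDerivAt
    exact hFd.comp_hasDerivAt (v j) hcd
  have hFc : (fun x => F (c x)) = fun x => eval (Function.update v j x) f := by
    funext x
    rw [hFdef]
    show eval ![Function.update v j x 0, Function.update v j x 1] f = _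
    rw [eta]
  rw [hFc] at hchain
  have h2 := aux_hasDerivAt_eval_update f v j (v j)
  rw [Function.update_eq_self] at h2
  have hDe : D e = eval v (pderiv j f) := hchain.unique h2
  have hDene : D e ≠ 0 := hDe ▸ hv
  -- the derivative is surjective
  have hrange : D.range = ⊤ := by
    rw [LinearMap.range_eq_top]
    intro w
    refine ⟨(w * (D e)⁻¹) • e, ?_⟩
    rw [ContinuousLinearMap.coe_coe, map_smul, smul_eq_mul, mul_assoc, inv_mul_cancel₀ hDene, mul_one]
  -- the kernel is nontrivial
  have hDz : ∀ z : L × L, D z = z.1 * D (1, 0) + z.2 * D (0, 1) := by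
    intro z
    have hz : z = z.1 • ((1 : L), (0 : L)) + z.2 • ((0 : L), (1 : L)) := by
      ext <;> simp
    rw [← smul_eq_mul, ← smul_eq_mul, ← map_smul, ← map_smul, ← map_add, ← hz]
  set u : L × L := (D (0, 1), -D (1, 0)) with hu
  have hune : u ≠ 0 := by
    intro h
    apply hDene
    have h1 : D ((1 : L), (0 : L)) = 0 := by
      have := congrArg Prod.snd h; simpa [hu] using this
    have h2 : D ((0 : L), (1 : L)) = 0 := by
      have := congrArg Prod.fst h; simpa [hu] using this
    rw [hDz e, h1, h2]; ring
  have huker : u ∈ D.ker := by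
    rw [LinearMap.mem_ker, ContinuousLinearMap.coe_coe, hDz u]
    simp [hu]; ring
  haveI : Nontrivial (D.ker) :=
    ⟨⟨u, huker⟩, 0, by simp [Subtype.ext_iff, hune]⟩
  -- implicit function theorem setup
  set Φ := hS.implicitToOpenPartialHomeomorph F D hrange with hΦ
  have htarget : (F a, (0 : D.ker)) ∈ Φ.target :=
    hS.mem_implicitToOpenPartialHomeomorph_target hrange
  have hopen : {z : D.ker | (F a, z) ∈ Φ.target} ∈ 𝓝 (0 : D.ker) :=
    (Φ.open_target.preimage (Continuous.prodMk_right (F a))).mem_nhds htarget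
  haveI : Filter.NeBot (𝓝[≠] (0 : D.ker)) :=
    Module.punctured_nhds_neBot L (D.ker) 0
  obtain ⟨z, hzt, hzne⟩ : ∃ z : D.ker, (F a, z) ∈ Φ.target ∧ z ≠ 0 := by
    have hmem : {z : D.ker | (F a, z) ∈ Φ.target} ∈ 𝓝[≠] (0 : D.ker) :=
      nhdsWithin_le_nhds hopen
    obtain ⟨z, hz1, hz2⟩ := Filter.nonempty_of_mem (Filter.inter_mem hmem self_mem_nhdsWithin)
    exact ⟨z, hz1, hz2⟩
  set x' : L × L := Φ.symm (F a, z) with hx'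
  have hΦx' : Φ x' = (F a, z) := Φ.right_inv hzt
  have hFx' : F x' = F a := by
    have := congrArg Prod.fst hΦx'
    rwa [hΦ, hS.implicitToOpenPartialHomeomorph_fst hrange x'] at this
  have hx'ne : x' ≠ a := by
    intro h
    apply hzne
    rw [h] at hΦx'
    rw [hΦ, hS.implicitToOpenPartialHomeomorph_self hrange] at hΦx'
    exact ((Prod.ext_iff.mp hΦx').2).symm
  exact hx'ne (hinj hFx')
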